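/- The cumulatively merged partition 𝒞 = 𝒞(G,r,α) satisfies: (i) any vertex x with r(x) < 1 is isolated, i.e. {x} ∈ 𝒞; (ii) every cluster C ∈ 𝒞 satisfies |C| ≤ max(r(C),1); (iii) for every cluster C ∈ 𝒞, r(C) = +∞ if and only if |C| = +∞; (iv) 𝒞 contains at most one infinite cluster. -/

import Mathlib

open scoped ENNReal NNReal
open MeasureTheory

namespace CMPPaper

variable {V : Type*}

/-- Graph distance between two subsets of vertices, valued in `ℝ≥0∞`
(`⊤` when one of the sets is empty). -/
noncomputable def setDist (G : SimpleGraph V) (A B : Set V) : ℝ≥0∞ :=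
  ⨅ (x : A) (y : B), (G.dist x.1 y.1 : ℝ≥0∞)

/-- Total weight `r(A) = Σ_{x ∈ A} r(x) ∈ [0,∞]` of a set of vertices. -/
noncomputable def wt (r : V → ℝ≥0) (A : Set V) : ℝ≥0∞ :=
  ∑' x : A, (r x.1 : ℝ≥0∞)

/-- A partition (encoded as a setoid) of the vertex set is `(r,α)`-admissible if any two
distinct clusters `C ≠ C'` satisfy `d(C,C') > min(r(C), r(C'))^α`. -/
def Admissible (G : SimpleGraph V) (r : V → ℝ≥0) (α : ℝ) (s : Setoid V) : Prop :=
  ∀ C ∈ s.classes, ∀ C' ∈ s.classes, C ≠ C' →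
    (min (wt r C) (wt r C')) ^ α < setDist G C C'

/-- The cumulatively merged partition: the finest `(r,α)`-admissible partition, i.e. the
intersection (infimum as setoids) of all `(r,α)`-admissible partitions. -/
noncomputable def CMP (G : SimpleGraph V) (r : V → ℝ≥0) (α : ℝ) : Setoid V :=
  sInf {s : Setoid V | Admissible G r α s}

/-- The cluster of the CMP containing `x`. -/
def cluster (G : SimpleGraph V) (r : V → ℝ≥0) (α : ℝ) (x : V) : Set V :=
  {y | (CMP G r α) x y}

/-- The ball `B(A, l) = {z : d(z,A) ≤ l}` around a set of vertices. -/
def ballSet (G : SimpleGraph V) (A : Set V) (l : ℝ≥0∞) : Set V :=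
  {z | ∃ a ∈ A, (G.dist z a : ℝ≥0∞) ≤ l}

/-- A subset `H` of the vertices is stable if every cluster `C` of the CMP of the induced
subgraph on `H` (with the restricted weights) satisfies `B(C, r(C)^α) ⊆ H`. -/
def IsStable (G : SimpleGraph V) (r : V → ℝ≥0) (α : ℝ) (H : Set V) : Prop :=
  ∀ C ∈ (CMP (G.induce H) (fun x : H => r x) α).classes,
    ballSet G (Subtype.val '' C) ((wt (fun x : H => r x) C) ^ α) ⊆ H

/-- The stabiliser of `W`: the smallest stable set containing `W`, i.e. the intersection of
all stable sets containing `W`. -/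
def stabiliser (G : SimpleGraph V) (r : V → ℝ≥0) (α : ℝ) (W : Set V) : Set V :=
  ⋂₀ {H : Set V | IsStable G r α H ∧ W ⊆ H}

open Classical in
/-- The merging operator `M_{x,y}`: if the clusters of `x` and `y` are distinct and
`d(x,y) ≤ min(r(𝒞_x), r(𝒞_y))^α`, merge them (take the smallest coarsening of `s`
relating `x` and `y`); otherwise leave the partition unchanged. -/
noncomputable def mergeOp (G : SimpleGraph V) (r : V → ℝ≥0) (α : ℝ) (x y : V)
    (s : Setoid V) : Setoid V :=
  if ¬ s x y ∧ (G.dist x y : ℝ≥0∞) ≤ (min (wt r {u | s x u}) (wt r {u | s y u})) ^ α then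
    sInf {t : Setoid V | s ≤ t ∧ t x y}
  else s

/-- The relation `C ↦ C'` (`C'` descends from `C`) on clusters of the CMP. -/
def Descends (G : SimpleGraph V) (r : V → ℝ≥0) (α : ℝ) (C C' : Set V) : Prop :=
  C ∈ (CMP G r α).classes ∧ C' ∈ (CMP G r α).classes ∧ C ≠ C' ∧
    setDist G C C' ≤ (wt r C) ^ α

/-- Integer part of an extended nonnegative real, valued in `ℕ∞`. -/
noncomputable def efloor (x : ℝ≥0∞) : ℕ∞ :=
  if x = ⊤ then ⊤ else (⌊x.toReal⌋₊ : ℕ∞)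

/-- The bound `max(w log₂ w / 2, 0)` (for `α = 1`), resp. `w^α/(2^α-2)` (for `α ≠ 1`),
on the diameter of a cluster of total weight `w`. -/
noncomputable def diamBound (α : ℝ) (w : ℝ≥0∞) : ℝ≥0∞ :=
  if α = 1 then
    (if w = ⊤ then ⊤ else ENNReal.ofReal (max (w.toReal * Real.logb 2 w.toReal / 2) 0))
  else w ^ α / ((2 : ℝ≥0∞) ^ α - 2)

/-- The relation `C →η C'` on clusters of the CMP:  `d(C,C') ≤ η·r(C)^α`. -/
def EtaDesc (G : SimpleGraph V) (r : V → ℝ≥0) (α η : ℝ) (C C' : Set V) : Prop :=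
  C ∈ (CMP G r α).classes ∧ C' ∈ (CMP G r α).classes ∧ C ≠ C' ∧
    setDist G C C' ≤ ENNReal.ofReal η * (wt r C) ^ α

/-- The `η`-stabiliser of a vertex `x`: the union of `𝒞_x` together with all clusters
reachable from `𝒞_x` by a finite oriented path for the relation `→η`. -/
def etaStab (G : SimpleGraph V) (r : V → ℝ≥0) (α η : ℝ) (x : V) : Set V :=
  ⋃₀ {C' | Relation.ReflTransGen (EtaDesc G r α η) (cluster G r α x) C'}

/-- The path graph on `ℕ`: `m` and `m+1` are adjacent. -/
def pathGraphN : SimpleGraph ℕ := SimpleGraph.fromRel (fun m n => n = m + 1)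

/-- The two-sided path graph on `ℤ`: `k` and `k+1` are adjacent. -/
def pathGraphZ : SimpleGraph ℤ := SimpleGraph.fromRel (fun a b => b = a + 1)

/-- The hypercubic lattice `ℤ^d`: `x` and `y` are adjacent iff `‖x-y‖₁ = 1`. -/
def latticeGraph (d : ℕ) : SimpleGraph (Fin d → ℤ) :=
  SimpleGraph.fromRel (fun x y => (∑ i, |x i - y i|) = 1)

/-- The CMP of the weighted graph `(G, r)` with expansion exponent `α` has an
infinite cluster. -/
def HasInfiniteCluster (G : SimpleGraph V) (r : V → ℝ≥0) (α : ℝ) : Prop :=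
  ∃ C ∈ (CMP G r α).classes, C.Infinite

/-- `w` is an i.i.d. family of Bernoulli(`p`) weights indexed by `V`, under the
probability measure `μ`. -/
def IsBernoulliField {Ω : Type*} [MeasurableSpace Ω] (μ : Measure Ω)
    (p : ℝ) (w : Ω → V → ℝ≥0) : Prop :=
  (∀ x : V, Measurable fun ω => w ω x) ∧
  (∀ ω x, w ω x = 0 ∨ w ω x = 1) ∧
  (∀ x : V, μ {ω | w ω x = 1} = ENNReal.ofReal p) ∧
  ProbabilityTheory.iIndepFun (fun x ω => w ω x) μ

/-- `w` is an i.i.d. family of weights indexed by `V`, each with law `ν`, under the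
probability measure `μ`. -/
def IsIIDField {Ω : Type*} [MeasurableSpace Ω] (μ : Measure Ω)
    (ν : Measure ℝ≥0) (w : Ω → V → ℝ≥0) : Prop :=
  (∀ x : V, Measurable fun ω => w ω x) ∧
  (∀ x : V, μ.map (fun ω => w ω x) = ν) ∧
  ProbabilityTheory.iIndepFun (fun x ω => w ω x) μ


section Aux

variable {G : SimpleGraph V} {r : V → ℝ≥0} {α : ℝ}

lemma wt_mono {A B : Set V} (h : A ⊆ B) : wt r A ≤ wt r B := by
  unfold wt
  rw [tsum_subtype A fun v => (r v : ℝ≥0∞), tsum_subtype B fun v => (r v : ℝ≥0∞)]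
  exact ENNReal.tsum_le_tsum fun x =>
    Set.indicator_le_indicator_of_subset h (fun _ => zero_le) x

lemma wt_singleton (x : V) : wt r {x} = r x := by
  unfold wt
  exact tsum_singleton x fun v => (r v : ℝ≥0∞)

lemma setDist_le {A B : Set V} {x y : V} (hx : x ∈ A) (hy : y ∈ B) :
    setDist G A B ≤ (G.dist x y : ℝ≥0∞) := by
  show (⨅ (a : A) (b : B), (G.dist a.1 b.1 : ℝ≥0∞)) ≤ _
  calc (⨅ (a : A) (b : B), (G.dist a.1 b.1 : ℝ≥0∞))
      ≤ ⨅ (b : B), (G.dist x b.1 : ℝ≥0∞) := iInf_le _ (⟨x, hx⟩ : A)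
    _ ≤ (G.dist x y : ℝ≥0∞) := iInf_le _ (⟨y, hy⟩ : B)

lemma one_le_setDist (hconn : G.Connected) {A B : Set V}
    (h : ∀ a ∈ A, ∀ b ∈ B, a ≠ b) : 1 ≤ setDist G A B := by
  unfold setDist
  refine le_iInf fun a => le_iInf fun b => ?_
  have h1 : 0 < G.dist a.1 b.1 := hconn.pos_dist_of_ne (h a.1 a.2 b.1 b.2)
  exact_mod_cast h1

lemma cmp_rel_iff {x y : V} :
    CMP G r α x y ↔ ∀ s : Setoid V, Admissible G r α s → s x y :=
  Setoid.sInf_iff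

lemma class_eq {s : Setoid V} {C : Set V} (hC : C ∈ s.classes) {x : V} (hx : x ∈ C) :
    C = {z | s z x} :=
  Setoid.eq_of_mem_classes hC hx (s.mem_classes x) (s.refl' x)

lemma isolated (hconn : G.Connected) (hα : 1 ≤ α) (x : V) (hx : r x < 1) :
    cluster G r α x = {x} := by
  set s : Setoid V :=
    ⟨fun a b => a = b ∨ (a ≠ x ∧ b ≠ x),
     ⟨fun a => Or.inl rfl,
      fun h => by rcases h with rfl | ⟨h1, h2⟩; exacts [Or.inl rfl, Or.inr ⟨h2, h1⟩],
      fun h1 h2 => by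
        rcases h1 with rfl | ⟨ha, hb⟩
        · exact h2
        · rcases h2 with rfl | ⟨hb', hc⟩
          exacts [Or.inr ⟨ha, hb⟩, Or.inr ⟨ha, hc⟩]⟩⟩ with hs
  have hcl : ∀ D ∈ s.classes, D = {x} ∨ D = {x}ᶜ := by
    rintro D ⟨b, rfl⟩
    by_cases hb : b = x
    · subst hb
      left
      ext a
      simp only [Set.mem_setOf_eq, Set.mem_singleton_iff]
      constructor
      · rintro (rfl | ⟨_, hbx⟩)
        · rfl
        · exact absurd rfl hbx
      · rintro rfl; exact Or.inl rfl
    · right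
      ext a
      simp only [Set.mem_setOf_eq, Set.mem_compl_iff, Set.mem_singleton_iff]
      constructor
      · rintro (rfl | ⟨h, _⟩)
        · exact hb
        · exact h
      · intro h; exact Or.inr ⟨h, hb⟩
  have hadm : Admissible G r α s := by
    intro C hC C' hC' hne
    have hmin : min (wt r C) (wt r C') ≤ (r x : ℝ≥0∞) := by
      rcases hcl C hC with rfl | rfl
      · exact (min_le_left _ _).trans (wt_singleton x).le
      · rcases hcl C' hC' with rfl | rfl
        · exact (min_le_right _ _).trans (wt_singleton x).le
        · exact absurd rfl hne
    have hdisj : ∀ a ∈ C, ∀ b ∈ C', a ≠ b := fun a ha b hb hab =>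
      hne (Setoid.eq_of_mem_classes hC ha hC' (hab ▸ hb))
    calc (min (wt r C) (wt r C')) ^ α ≤ ((r x : ℝ≥0∞)) ^ α :=
          ENNReal.rpow_le_rpow hmin (by linarith)
      _ ≤ ((r x : ℝ≥0∞)) ^ (1 : ℝ) :=
          ENNReal.rpow_le_rpow_of_exponent_ge (by exact_mod_cast hx.le) hα
      _ = (r x : ℝ≥0∞) := ENNReal.rpow_one _
      _ < 1 := by exact_mod_cast hx
      _ ≤ setDist G C C' := one_le_setDist hconn hdisj
  apply Set.eq_singleton_iff_unique_mem.mpr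
  refine ⟨(CMP G r α).refl' x, fun y hy => ?_⟩
  have hxy : CMP G r α x y := hy
  have := cmp_rel_iff.mp hxy s hadm
  rcases this with rfl | ⟨hxx, _⟩
  · rfl
  · exact absurd rfl hxx

lemma one_le_r_of_nontrivial (hconn : G.Connected) (hα : 1 ≤ α) {C : Set V}
    (hC : C ∈ (CMP G r α).classes) (hnt : C.Nontrivial) {x : V} (hx : x ∈ C) :
    (1 : ℝ≥0) ≤ r x := by
  by_contra h
  push_neg at h
  have h1 : cluster G r α x = {x} := isolated hconn hα x h
  have h2 : C = cluster G r α x := by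
    rw [class_eq hC hx]
    ext z
    exact ⟨fun hz => (CMP G r α).symm' hz, fun hz => (CMP G r α).symm' hz⟩
  rw [h2, h1] at hnt
  obtain ⟨a, ha, b, hb, hab⟩ := hnt
  rw [Set.mem_singleton_iff] at ha hb
  exact hab (ha.trans hb.symm)

lemma encard_le_wt (hconn : G.Connected) (hα : 1 ≤ α) {C : Set V}
    (hC : C ∈ (CMP G r α).classes) (hnt : C.Nontrivial) :
    (C.encard : ℝ≥0∞) ≤ wt r C := by
  rw [← ENNReal.tsum_set_one]
  exact ENNReal.tsum_le_tsum fun x => by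
    exact_mod_cast one_le_r_of_nontrivial hconn hα hC hnt x.2

lemma wt_ne_top_of_finite {C : Set V} (h : C.Finite) : wt r C ≠ ⊤ := by
  have := h.fintype
  unfold wt
  rw [tsum_fintype]
  exact (ENNReal.sum_lt_top.mpr fun a _ => ENNReal.coe_lt_top).ne

lemma wt_eq_top_of_infinite (hconn : G.Connected) (hα : 1 ≤ α) {C : Set V}
    (hC : C ∈ (CMP G r α).classes) (hinf : C.Infinite) : wt r C = ⊤ := by
  have h1 := encard_le_wt hconn hα hC hinf.nontrivial
  rw [hinf.encard_eq, ENat.toENNReal_top] at h1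
  exact top_le_iff.mp h1

end Aux

/-- Basic properties of the CMP: (i) any vertex of weight `< 1` is isolated;
(ii) `|C| ≤ max(r(C), 1)` for every cluster; (iii) a cluster has infinite weight iff it is
infinite; (iv) there is at most one infinite cluster. -/
theorem CMP_basic_properties
    {V : Type*} (G : SimpleGraph V) (hconn : G.Connected)
    (hlf : ∀ v : V, (G.neighborSet v).Finite)
    (r : V → ℝ≥0) (α : ℝ) (hα : 1 ≤ α) :
    (∀ x : V, r x < 1 → cluster G r α x = {x}) ∧
    (∀ C ∈ (CMP G r α).classes, (C.encard : ℝ≥0∞) ≤ max (wt r C) 1) ∧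
    (∀ C ∈ (CMP G r α).classes, (wt r C = ⊤ ↔ C.Infinite)) ∧
    (∀ C ∈ (CMP G r α).classes, ∀ C' ∈ (CMP G r α).classes,
      C.Infinite → C'.Infinite → C = C') := by
  refine ⟨fun x hx => isolated hconn hα x hx, ?_, ?_, ?_⟩
  · intro C hC
    by_cases hnt : C.Nontrivial
    · exact le_trans (encard_le_wt hconn hα hC hnt) (le_max_left _ _)
    · have h1 : C.encard ≤ 1 := by
        rw [Set.encard_le_one_iff]
        intro a b ha hb
        by_contra hab
        exact hnt ⟨a, ha, b, hb, hab⟩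
      calc (C.encard : ℝ≥0∞) ≤ ((1 : ℕ∞) : ℝ≥0∞) := by exact_mod_cast h1
        _ = 1 := by simp
        _ ≤ max (wt r C) 1 := le_max_right _ _
  · intro C hC
    constructor
    · intro htop
      by_contra hfin
      rw [Set.not_infinite] at hfin
      exact wt_ne_top_of_finite hfin htop
    · exact wt_eq_top_of_infinite hconn hα hC
  · intro C hC C' hC' hinf hinf'
    obtain ⟨x₀, hx₀⟩ := hinf.nonempty
    obtain ⟨y₀, hy₀⟩ := hinf'.nonempty
    have hrel : CMP G r α x₀ y₀ := by
      refine cmp_rel_iff.mpr fun s hs => ?_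
      by_contra hxy
      have hD : {z | s z x₀} ∈ s.classes := s.mem_classes x₀
      have hD' : {z | s z y₀} ∈ s.classes := s.mem_classes y₀
      have hDne : {z | s z x₀} ≠ {z | s z y₀} := by
        intro h
        have hx : x₀ ∈ {z | s z x₀} := s.refl' x₀
        rw [h] at hx
        exact hxy hx
      have hle : CMP G r α ≤ s := sInf_le hs
      have hCsub : C ⊆ {z | s z x₀} := by
        intro a ha
        have := (class_eq hC hx₀) ▸ ha
        exact Setoid.le_def.mp hle this
      have hCsub' : C' ⊆ {z | s z y₀} := by
        intro a ha
        have := (class_eq hC' hy₀) ▸ ha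
        exact Setoid.le_def.mp hle this
      have h1 : wt r {z | s z x₀} = ⊤ := top_le_iff.mp
        ((wt_eq_top_of_infinite hconn hα hC hinf) ▸ wt_mono hCsub)
      have h2 : wt r {z | s z y₀} = ⊤ := top_le_iff.mp
        ((wt_eq_top_of_infinite hconn hα hC' hinf') ▸ wt_mono hCsub')
      have hadm := hs _ hD _ hD' hDne
      rw [h1, h2, min_self, ENNReal.top_rpow_of_pos (by linarith)] at hadm
      exact not_top_lt hadm
    have e1 : C = {z | CMP G r α z x₀} := class_eq hC hx₀
    have e2 : C' = {z | CMP G r α z y₀} := class_eq hC' hy₀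
    rw [e1, e2]
    ext z
    simp only [Set.mem_setOf_eq]
    exact ⟨fun h => (CMP G r α).trans' h hrel,
      fun h => (CMP G r α).trans' h ((CMP G r α).symm' hrel)⟩


end CMPPaper
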